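/- Let T = (V, A) be a polytree, and suppose X, Y ⊆ V satisfy w(e; X, Y) ≥ 0 for all arcs e ∈ A and there exists an arc e* with w(e*; X, Y) > 0. Let T' be the weakly connected subgraph of T induced by the arcs e with w(e; X, Y) > 0 that contains e*. Then |V(T') ∩ X| = |V(T') ∩ Y|, and T' contains a vertex v ∈ X with no in-neighbor in T' and at least one out-neighbor in T'. -/

import Mathlib

open scoped Classical

variable {V : Type*}

/-- The underlying undirected simple graph of a digraph given by its arc relation. -/
def underlying (A : V → V → Prop) : SimpleGraph V := SimpleGraph.fromRel A

/-- A polytree: a loopless digraph without antiparallel arcs whose underlying graph is a tree. -/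
def IsPolytree (A : V → V → Prop) : Prop :=
  (∀ v, ¬ A v v) ∧ (∀ u v, A u v → ¬ A v u) ∧ (underlying A).IsTree

/-- `x` lies in the weakly connected component of `T - (a,b)` containing the tail `a`. -/
def InCminus (A : V → V → Prop) (a b x : V) : Prop :=
  ((underlying A).deleteEdges {s(a, b)}).Reachable a x

/-- `w((a,b); X, Y) = |C⁻ ∩ X| - |C⁻ ∩ Y|`. -/
noncomputable def wArc [Fintype V] [DecidableEq V] (A : V → V → Prop)
    (X Y : Finset V) (a b : V) : ℤ :=
  ((X.filter fun x => InCminus A a b x).card : ℤ) -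
    ((Y.filter fun x => InCminus A a b x).card : ℤ)

/-- Independence in the underlying undirected graph. -/
def IndepF (A : V → V → Prop) (I : Finset V) : Prop :=
  ∀ u ∈ I, ∀ v ∈ I, ¬ (underlying A).Adj u v

/-- One token-sliding step along an arc, in its direction. -/
def IsStep [DecidableEq V] (A : V → V → Prop) (I J : Finset V) : Prop :=
  ∃ u v, A u v ∧ I \ J = {u} ∧ J \ I = {v}

/-- A reconfiguration sequence of independent sets under directed token sliding. -/
def IsReconfSeq [DecidableEq V] (A : V → V → Prop) {ℓ : ℕ}
    (f : Fin (ℓ + 1) → Finset V) : Prop :=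
  (∀ i, IndepF A (f i)) ∧ ∀ i : Fin ℓ, IsStep A (f i.castSucc) (f i.succ)

/-- `I` is reconfigurable into `J` under directed token sliding. -/
def Reconfigurable [DecidableEq V] (A : V → V → Prop) (I J : Finset V) : Prop :=
  ∃ (ℓ : ℕ) (f : Fin (ℓ + 1) → Finset V),
    IsReconfSeq A f ∧ f 0 = I ∧ f (Fin.last ℓ) = J

/-- A directed path in the digraph `A`, given by its (distinct) vertices in order. -/
structure DirPath (A : V → V → Prop) where
  len : ℕ
  vtx : Fin (len + 1) → V
  inj : Function.Injective vtx
  arc : ∀ i : Fin len, A (vtx i.castSucc) (vtx i.succ)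

namespace DirPath
variable {A : V → V → Prop}
/-- The source of a directed path. -/
def src (p : DirPath A) : V := p.vtx 0
/-- The sink of a directed path. -/
def snk (p : DirPath A) : V := p.vtx (Fin.last p.len)
/-- The second vertex `s'(P)` of a directed path. -/
def sndVtx (p : DirPath A) : V := p.vtx ⟨min 1 p.len, by omega⟩
/-- The second-to-last vertex `t'(P)` of a directed path. -/
def penVtx (p : DirPath A) : V := p.vtx ⟨p.len - 1, by omega⟩
/-- `v` is a vertex of the path `p`. -/
def mem (p : DirPath A) (v : V) : Prop := ∃ i, p.vtx i = v
/-- `x` is an internal vertex of `p` (neither source nor sink). -/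
def internal (p : DirPath A) (x : V) : Prop :=
  ∃ i : Fin (p.len + 1), p.vtx i = x ∧ i ≠ 0 ∧ i ≠ Fin.last p.len
end DirPath

/-- A directed path matching from `X` to `Y`: distinct sources forming `X`,
distinct sinks forming `Y`. -/
def IsDPM [DecidableEq V] {A : V → V → Prop} {k : ℕ}
    (X Y : Finset V) (P : Fin k → DirPath A) : Prop :=
  (Function.Injective fun i => (P i).src) ∧ (Function.Injective fun i => (P i).snk) ∧
  (Finset.univ.image fun i => (P i).src) = X ∧ (Finset.univ.image fun i => (P i).snk) = Y

/-- The path-set conditions (P1)–(P4). -/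
def PathSetConds [DecidableEq V] {A : V → V → Prop} {k : ℕ}
    (X Y : Finset V) (P : Fin k → DirPath A) : Prop :=
  (∀ i, 2 ≤ (P i).len) ∧ IsDPM X Y P ∧
  (∀ i j, i ≠ j → (P i).sndVtx ≠ (P j).sndVtx) ∧
  (∀ i j, i ≠ j → (P i).penVtx ≠ (P j).penVtx)

/-- Length of the (unique, when it exists) directed path from `u` to `v`. -/
noncomputable def ddist (A : V → V → Prop) (u v : V) : ℕ :=
  sInf {n | ∃ p : DirPath A, p.src = u ∧ p.snk = v ∧ p.len = n}

/-- A biased path pair: a common internal vertex `x` with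
`dist(s(p),x) > dist(s(q),x)` and `dist(x,t(p)) > dist(x,t(q))`. -/
def BiasedPair (A : V → V → Prop) (p q : DirPath A) : Prop :=
  ∃ x, p.internal x ∧ q.internal x ∧
    ddist A q.src x < ddist A p.src x ∧ ddist A x q.snk < ddist A x p.snk

/-- A rigid token: `v ∈ X ∩ Y` and all incident arcs have `w`-value `0`. -/
def RigidTok [Fintype V] [DecidableEq V] (A : V → V → Prop) (X Y : Finset V) (v : V) : Prop :=
  v ∈ X ∧ v ∈ Y ∧ ∀ a b, A a b → (a = v ∨ b = v) → wArc A X Y a b = 0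

/-- A blocking arc: `w((u,v)) = 1` and every other arc incident to `u` or `v`
has `w`-value `0`. -/
def BlockingArc [Fintype V] [DecidableEq V] (A : V → V → Prop) (X Y : Finset V)
    (u v : V) : Prop :=
  A u v ∧ wArc A X Y u v = 1 ∧
    ∀ a b, A a b → (a, b) ≠ (u, v) → (a = u ∨ b = u ∨ a = v ∨ b = v) →
      wArc A X Y a b = 0

/-- A trajectory of a single token along a reconfiguration sequence. -/
def IsTrajectory [DecidableEq V] (A : V → V → Prop) {ℓ : ℕ}
    (f : Fin (ℓ + 1) → Finset V) (g : Fin (ℓ + 1) → V) : Prop :=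
  (∀ i, g i ∈ f i) ∧ ∀ i : Fin ℓ,
    g i.succ = g i.castSucc ∨
      (f i.castSucc \ f i.succ = {g i.castSucc} ∧ f i.succ \ f i.castSucc = {g i.succ})

/-- Number of steps of a reconfiguration sequence sliding a token from `u` to `v`. -/
noncomputable def movesAlong [DecidableEq V] {ℓ : ℕ} (f : Fin (ℓ + 1) → Finset V)
    (u v : V) : ℕ :=
  (Finset.univ.filter fun i : Fin ℓ =>
    f i.castSucc \ f i.succ = {u} ∧ f i.succ \ f i.castSucc = {v}).card

/-- Number of forward arc traversals of a walk with vertex list `l`. -/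
noncomputable def fwdCount (A : V → V → Prop) (l : List V) : ℕ :=
  (l.zip l.tail).countP fun p => decide (A p.1 p.2)

/-- Number of reverse arc traversals of a walk with vertex list `l`. -/
noncomputable def revCount (A : V → V → Prop) (l : List V) : ℕ :=
  (l.zip l.tail).countP fun p => decide (A p.2 p.1)

/-- Number of traversals of the ordered pair `(a, b)` by a walk with vertex list `l`. -/
def traverseCount [DecidableEq V] (l : List V) (a b : V) : ℕ :=
  (l.zip l.tail).count (a, b)

/-- A vertex `v` touches a directed path `p` if `N[v]` meets the vertex set of `p`. -/
def Touches (A : V → V → Prop) (v : V) (p : DirPath A) : Prop :=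
  ∃ u, p.mem u ∧ (u = v ∨ (underlying A).Adj v u)

/-- Independence in an undirected graph (for undirected token sliding). -/
def UIndep (G : SimpleGraph V) (I : Finset V) : Prop :=
  ∀ u ∈ I, ∀ v ∈ I, ¬ G.Adj u v

/-- One undirected token-sliding step along an edge. -/
def UIsStep [DecidableEq V] (G : SimpleGraph V) (I J : Finset V) : Prop :=
  ∃ u v, G.Adj u v ∧ I \ J = {u} ∧ J \ I = {v}

/-- Reconfigurability under (undirected) token sliding. -/
def UReconfigurable [DecidableEq V] (G : SimpleGraph V) (I J : Finset V) : Prop :=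
  ∃ (ℓ : ℕ) (f : Fin (ℓ + 1) → Finset V),
    (∀ i, UIndep G (f i)) ∧ (∀ i : Fin ℓ, UIsStep G (f i.castSucc) (f i.succ)) ∧
    f 0 = I ∧ f (Fin.last ℓ) = J


section Aux19

open Finset SimpleGraph

variable [Fintype V] [DecidableEq V] {A : V → V → Prop}

private lemma adj_of_arc (hT : IsPolytree A) {u v : V} (h : A u v) :
    (underlying A).Adj u v := by
  refine (SimpleGraph.fromRel_adj A u v).mpr ⟨?_, Or.inl h⟩
  rintro rfl; exact hT.1 u h

private lemma bridge19 (hT : IsPolytree A) {u v : V} (h : (underlying A).Adj u v) :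
    ¬ ((underlying A).deleteEdges {s(u, v)}).Reachable u v :=
  (SimpleGraph.isBridge_iff.mp
    ((SimpleGraph.isAcyclic_iff_forall_adj_isBridge.mp hT.2.2.IsAcyclic) h))

private lemma cover_aux (hT : IsPolytree A) {u v : V} :
    ∀ {y x : V} (_ : (underlying A).Walk y x),
      (InCminus A u v y ∨ InCminus A v u y) → (InCminus A u v x ∨ InCminus A v u x) := by
  intro y x p
  induction p with
  | nil => exact id
  | @cons y z x hadj q ih =>
    intro hy
    apply ih
    by_cases he : s(y, z) = s(u, v)
    · rw [Sym2.eq_iff] at he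
      rcases he with ⟨h1, h2⟩ | ⟨h1, h2⟩
      · subst h2; exact Or.inr (Reachable.refl _)
      · subst h2; exact Or.inl (Reachable.refl _)
    · have h1 : ((underlying A).deleteEdges {s(u, v)}).Adj y z := by
        rw [SimpleGraph.deleteEdges_adj]
        exact ⟨hadj, by simp only [Set.mem_singleton_iff]; exact he⟩
      rcases hy with hy | hy
      · exact Or.inl (hy.trans h1.reachable)
      · refine Or.inr (hy.trans ?_)
        have h2 : ((underlying A).deleteEdges {s(v, u)}).Adj y z := by
          rw [SimpleGraph.deleteEdges_adj]
          refine ⟨hadj, ?_⟩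
          simp only [Set.mem_singleton_iff]
          intro hm
          exact he (hm.trans Sym2.eq_swap)
        exact h2.reachable

private lemma cover19 (hT : IsPolytree A) {u v : V} (_h : (underlying A).Adj u v) (x : V) :
    InCminus A u v x ∨ InCminus A v u x := by
  obtain ⟨p⟩ := hT.2.2.isConnected.preconnected u x
  exact cover_aux hT p (Or.inl (Reachable.refl u))

private lemma not_both19 (hT : IsPolytree A) {u v : V} (h : (underlying A).Adj u v) (x : V)
    (h1 : InCminus A u v x) (h2 : InCminus A v u x) : False := by
  apply bridge19 hT h
  have h2' : ((underlying A).deleteEdges {s(u, v)}).Reachable v x := by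
    rw [show s(u,v) = s(v,u) from Sym2.eq_swap]; exact h2
  exact h1.trans h2'.symm

private lemma not_inC_iff (hT : IsPolytree A) {u v : V} (h : (underlying A).Adj u v) (x : V) :
    ¬ InCminus A u v x ↔ InCminus A v u x :=
  ⟨fun hn => (cover19 hT h x).resolve_left hn, fun h2 h1 => not_both19 hT h x h1 h2⟩

private lemma exists_far (hT : IsPolytree A) {v x : V} (hx : x ≠ v) :
    ∃ u, (underlying A).Adj v u ∧ ¬ InCminus A v u x := by
  obtain ⟨w⟩ := hT.2.2.isConnected.preconnected v x
  obtain ⟨q, hq⟩ := w.toPath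
  cases q with
  | nil => exact absurd rfl hx
  | @cons _ u _ h q' =>
    refine ⟨u, h, fun hr => ?_⟩
    obtain ⟨r⟩ := hr
    obtain ⟨r1, hr1⟩ := r.toPath
    have hsub : ∀ e ∈ r1.edges, e ∈ (underlying A).edgeSet := fun e he =>
      (SimpleGraph.edgeSet_mono ((underlying A).deleteEdges_le _))
        (r1.edges_subset_edgeSet he)
    have heq := hT.2.2.IsAcyclic.path_unique
      (⟨Walk.cons h q', hq⟩ : (underlying A).Path v x)
      ⟨r1.transfer _ hsub, hr1.transfer hsub⟩
    have hmem : s(v, u) ∈ r1.edges := by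
      have h2 := congrArg (fun p : (underlying A).Path v x => p.1.edges) heq
      simp only at h2
      rw [Walk.edges_transfer] at h2
      rw [← h2, Walk.edges_cons]
      exact List.mem_cons_self
    have h3 := r1.edges_subset_edgeSet hmem
    rw [SimpleGraph.edgeSet_deleteEdges] at h3
    exact h3.2 rfl

private lemma unique_far (hT : IsPolytree A) {v u1 u2 x : V}
    (h1 : (underlying A).Adj v u1) (h2 : (underlying A).Adj v u2) (hne : u1 ≠ u2)
    (hf1 : ¬ InCminus A v u1 x) (hf2 : ¬ InCminus A v u2 x) : False := by
  have hx1 : InCminus A u1 v x := (not_inC_iff hT h1 x).mp hf1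
  obtain ⟨r⟩ := hx1
  obtain ⟨r1, hr1⟩ := r.toPath
  have hvsupp : v ∉ r1.support := by
    intro hv
    exact bridge19 hT h1.symm ⟨r1.takeUntil v hv⟩
  apply hf2
  have hadj : ((underlying A).deleteEdges {s(v, u2)}).Adj v u1 := by
    rw [SimpleGraph.deleteEdges_adj]
    refine ⟨h1, ?_⟩
    simp only [Set.mem_singleton_iff]
    intro he
    exact hne (Sym2.congr_right.mp he)
  have hsub : ∀ e ∈ r1.edges, e ∈ ((underlying A).deleteEdges {s(v, u2)}).edgeSet := by
    intro e he
    rw [SimpleGraph.edgeSet_deleteEdges]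
    refine ⟨(SimpleGraph.edgeSet_mono ((underlying A).deleteEdges_le _))
      (r1.edges_subset_edgeSet he), ?_⟩
    intro h'
    rw [Set.mem_singleton_iff] at h'
    exact hvsupp (r1.fst_mem_support_of_mem_edges (by rwa [h'] at he))
  exact hadj.reachable.trans ⟨r1.transfer _ hsub⟩

/-- signed indicator -/
private def mu19 (X Y : Finset V) (x : V) : ℤ :=
  (if x ∈ X then 1 else 0) - (if x ∈ Y then 1 else 0)

private lemma filter_card_eq19 (X : Finset V) (p : V → Prop) [DecidablePred p] :
    ((X.filter p).card : ℤ) = ∑ x, if p x ∧ x ∈ X then (1 : ℤ) else 0 := by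
  have h : X.filter p = univ.filter (fun x => p x ∧ x ∈ X) := by
    ext y; simp [and_comm]
  rw [h, Finset.sum_boole]

private lemma dsum19 (X Y : Finset V) (p : V → Prop) [DecidablePred p] :
    ((X.filter p).card : ℤ) - ((Y.filter p).card : ℤ)
      = ∑ x, if p x then mu19 X Y x else 0 := by
  rw [filter_card_eq19, filter_card_eq19, ← Finset.sum_sub_distrib]
  apply Finset.sum_congr rfl
  intro x _
  by_cases hp : p x <;> by_cases hX : x ∈ X <;> by_cases hY : x ∈ Y <;>
    simp [mu19, hp, hX, hY]

private lemma wArc_eq19 (X Y : Finset V) (a b : V) :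
    wArc A X Y a b = ∑ x, if InCminus A a b x then mu19 X Y x else 0 :=
  dsum19 X Y _

private lemma mu_total19 (X Y : Finset V) (hcard : X.card = Y.card) :
    ∑ x, mu19 X Y x = 0 := by
  simp [mu19, Finset.sum_sub_distrib, Finset.sum_boole, Finset.filter_univ_mem, hcard]

private lemma star19 (hT : IsPolytree A) (X Y : Finset V) (hcard : X.card = Y.card) (v : V) :
    mu19 X Y v = (∑ u ∈ univ.filter (fun u => A v u), wArc A X Y v u)
               - (∑ u ∈ univ.filter (fun u => A u v), wArc A X Y u v) := by
  classical
  set Nv := univ.filter (fun u => (underlying A).Adj v u) with hNvdef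
  -- pointwise partition identity
  have hpart : ∀ x : V,
      (∑ u ∈ Nv, if ¬ InCminus A v u x then mu19 X Y x else 0)
        = if x = v then 0 else mu19 X Y x := by
    intro x
    by_cases hx : x = v
    · rw [if_pos hx]
      apply Finset.sum_eq_zero
      intro u _
      rw [if_neg (not_not_intro (hx ▸ (Reachable.refl v)))]
    · rw [if_neg hx]
      obtain ⟨u₀, hu₀adj, hu₀far⟩ := exists_far hT hx
      rw [Finset.sum_eq_single u₀]
      · rw [if_pos hu₀far]
      · intro u hu hne
        rw [if_neg]
        intro hfar
        exact unique_far hT hu₀adj (Finset.mem_filter.mp hu).2 (Ne.symm hne) hu₀far hfar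
      · intro h'
        exact absurd (Finset.mem_filter.mpr ⟨Finset.mem_univ _, hu₀adj⟩) h'
  -- sum the partition identity over x
  have hsum : ∑ u ∈ Nv, (∑ x, if ¬ InCminus A v u x then mu19 X Y x else 0)
      = - mu19 X Y v := by
    rw [Finset.sum_comm]
    have h1 : ∑ x, (∑ u ∈ Nv, if ¬ InCminus A v u x then mu19 X Y x else 0)
        = ∑ x, if x = v then 0 else mu19 X Y x := Finset.sum_congr rfl (fun x _ => hpart x)
    rw [h1]
    have h2 : ∀ x : V, (if x = v then (0:ℤ) else mu19 X Y x)
        = mu19 X Y x - (if x = v then mu19 X Y x else 0) := by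
      intro x; by_cases h : x = v <;> simp [h]
    rw [Finset.sum_congr rfl (fun x _ => h2 x), Finset.sum_sub_distrib,
      mu_total19 X Y hcard, Finset.sum_ite_eq' univ v (mu19 X Y)]
    simp
  -- value of each far-sum
  have hfar_in : ∀ u ∈ Nv, A u v →
      (∑ x, if ¬ InCminus A v u x then mu19 X Y x else 0) = wArc A X Y u v := by
    intro u hu _
    rw [wArc_eq19]
    apply Finset.sum_congr rfl
    intro x _
    exact if_congr (not_inC_iff hT (Finset.mem_filter.mp hu).2 x) rfl rfl
  have hfar_out : ∀ u ∈ Nv,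
      (∑ x, if ¬ InCminus A v u x then mu19 X Y x else 0) = - wArc A X Y v u := by
    intro u _
    have h3 : (∑ x, if ¬ InCminus A v u x then mu19 X Y x else 0)
        + (∑ x, if InCminus A v u x then mu19 X Y x else 0) = ∑ x, mu19 X Y x := by
      rw [← Finset.sum_add_distrib]
      apply Finset.sum_congr rfl
      intro x _
      by_cases h : InCminus A v u x <;> simp [h]
    rw [mu_total19 X Y hcard, ← wArc_eq19] at h3
    linarith
  -- split Nv into out- and in-neighbours
  have hNv : Nv = univ.filter (fun u => A v u) ∪ univ.filter (fun u => A u v) := by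
    ext u
    simp only [hNvdef, Finset.mem_filter, Finset.mem_union, Finset.mem_univ, true_and]
    constructor
    · intro h
      exact ((SimpleGraph.fromRel_adj A v u).mp h).2
    · intro h
      rcases h with h | h
      · exact adj_of_arc hT h
      · exact (adj_of_arc hT h).symm
  have hdisj : Disjoint (univ.filter (fun u => A v u)) (univ.filter (fun u => A u v)) := by
    rw [Finset.disjoint_left]
    intro u h1 h2
    exact hT.2.1 v u (Finset.mem_filter.mp h1).2 (Finset.mem_filter.mp h2).2
  rw [hNv, Finset.sum_union hdisj] at hsum
  have hout : ∑ u ∈ univ.filter (fun u => A v u),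
      (∑ x, if ¬ InCminus A v u x then mu19 X Y x else 0)
      = ∑ u ∈ univ.filter (fun u => A v u), (- wArc A X Y v u) := by
    apply Finset.sum_congr rfl
    intro u hu
    exact hfar_out u (by rw [hNv]; exact Finset.mem_union_left _ hu)
  have hin : ∑ u ∈ univ.filter (fun u => A u v),
      (∑ x, if ¬ InCminus A v u x then mu19 X Y x else 0)
      = ∑ u ∈ univ.filter (fun u => A u v), wArc A X Y u v := by
    apply Finset.sum_congr rfl
    intro u hu
    exact hfar_in u (by rw [hNv]; exact Finset.mem_union_right _ hu)
      (Finset.mem_filter.mp hu).2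
  rw [hout, hin, Finset.sum_neg_distrib] at hsum
  linarith

private lemma chain_reach19 {H : SimpleGraph V} (g : ℕ → V) :
    ∀ m n, m ≤ n → (∀ k, m ≤ k → k < n → H.Adj (g k) (g (k + 1))) →
      H.Reachable (g m) (g n) := by
  intro m n hmn
  induction n, hmn using Nat.le_induction with
  | base => exact fun _ => Reachable.refl _
  | succ n hmn ih =>
    intro h
    exact (ih (fun k hk hk' => h k hk (by omega))).trans (h n hmn (by omega)).reachable

end Aux19

/-- If `w(e; X, Y) ≥ 0` everywhere and `w(e*; X, Y) > 0`, then the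
weakly connected subgraph `T'` spanned by the positive-`w` arcs containing `e*`
satisfies `|V(T') ∩ X| = |V(T') ∩ Y|`, and `T'` has a vertex `v ∈ X` with no
in-neighbor in `T'` and at least one out-neighbor in `T'`. -/
theorem stmt_19 [Fintype V] [DecidableEq V] (A : V → V → Prop) (hT : IsPolytree A)
    (X Y : Finset V) (hcard : X.card = Y.card)
    (hw : ∀ a b, A a b → 0 ≤ wArc A X Y a b)
    (a b : V) (hab : A a b) (hpos : 0 < wArc A X Y a b) :
    ((X.filter fun x =>
        (SimpleGraph.fromRel fun u v => A u v ∧ 0 < wArc A X Y u v).Reachable a x).card =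
      (Y.filter fun x =>
        (SimpleGraph.fromRel fun u v => A u v ∧ 0 < wArc A X Y u v).Reachable a x).card) ∧
    ∃ v, (SimpleGraph.fromRel fun u w => A u w ∧ 0 < wArc A X Y u w).Reachable a v ∧
      v ∈ X ∧ (∀ u, ¬ (A u v ∧ 0 < wArc A X Y u v)) ∧
      ∃ u, A v u ∧ 0 < wArc A X Y v u := by
  classical
  obtain ⟨hloop, hanti, htree⟩ := hT
  have hT' : IsPolytree A := ⟨hloop, hanti, htree⟩
  set s : V → Prop := fun x =>
    (SimpleGraph.fromRel fun u v => A u v ∧ 0 < wArc A X Y u v).Reachable a x with hs_def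
  have hstep : ∀ p q, A p q → 0 < wArc A X Y p q → (s p ↔ s q) := by
    intro p q hA hp
    have hadj : (SimpleGraph.fromRel fun u v => A u v ∧ 0 < wArc A X Y u v).Adj p q := by
      rw [SimpleGraph.fromRel_adj]
      exact ⟨by rintro rfl; exact hloop p hA, Or.inl ⟨hA, hp⟩⟩
    exact ⟨fun h => h.trans hadj.reachable, fun h => h.trans hadj.symm.reachable⟩
  have hmain : (∑ x, if s x then mu19 X Y x else 0) = 0 := by
    have hrw : ∀ v : V, (if s v then mu19 X Y v else 0)
        = (∑ u, if s v ∧ A v u then wArc A X Y v u else 0)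
          - (∑ u, if s v ∧ A u v then wArc A X Y u v else 0) := by
      intro v
      by_cases hv : s v
      · rw [if_pos hv, star19 hT' X Y hcard v, Finset.sum_filter, Finset.sum_filter]
        congr 1 <;> (apply Finset.sum_congr rfl; intro u _; simp [hv])
      · simp [hv]
    rw [Finset.sum_congr rfl (fun v _ => hrw v), Finset.sum_sub_distrib]
    have hswap : (∑ v, ∑ u, if s v ∧ A u v then wArc A X Y u v else 0)
        = ∑ v, ∑ u, if s u ∧ A v u then wArc A X Y v u else 0 := Finset.sum_comm
    rw [hswap, ← Finset.sum_sub_distrib]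
    apply Finset.sum_eq_zero
    intro v _
    rw [← Finset.sum_sub_distrib]
    apply Finset.sum_eq_zero
    intro u _
    by_cases hA : A v u
    · rcases (hw v u hA).lt_or_eq with hpos' | heq0
      · have hsu : s v ↔ s u := hstep v u hA hpos'
        by_cases h1 : s v
        · rw [if_pos ⟨h1, hA⟩, if_pos ⟨hsu.mp h1, hA⟩, sub_self]
        · rw [if_neg (fun hc => h1 hc.1), if_neg (fun hc => h1 (hsu.mpr hc.1)), sub_self]
      · by_cases h1 : s v <;> by_cases h2 : s u <;> simp [hA, h1, h2, ← heq0]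
    · rw [if_neg (fun hc => hA hc.2), if_neg (fun hc => hA hc.2), sub_self]
  constructor
  · have hd : ((X.filter s).card : ℤ) - ((Y.filter s).card : ℤ) = 0 :=
      (dsum19 X Y s).trans hmain
    exact_mod_cast sub_eq_zero.mp hd
  · have hsrc : ∃ v, s v ∧ ∀ u, ¬ (A u v ∧ 0 < wArc A X Y u v) := by
      by_contra hno
      push_neg at hno
      obtain ⟨f, hfspec⟩ : ∃ f : V → V,
          ∀ v, s v → (A (f v) v ∧ 0 < wArc A X Y (f v) v) :=
        ⟨fun v => if h : s v then (hno v h).choose else v,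
         fun v h => by dsimp only; rw [dif_pos h]; exact (hno v h).choose_spec⟩
      set g : ℕ → V := fun n => f^[n] a with hg_def
      have hgsucc : ∀ n, g (n + 1) = f (g n) := fun n => Function.iterate_succ_apply' f n a
      have hgS : ∀ n, s (g n) := by
        intro n
        induction n with
        | zero => exact SimpleGraph.Reachable.refl a
        | succ n ih =>
          rw [hgsucc]
          obtain ⟨hA, hp⟩ := hfspec (g n) ih
          exact (hstep _ _ hA hp).mpr ih
      have harc : ∀ n, A (g (n + 1)) (g n) ∧ 0 < wArc A X Y (g (n + 1)) (g n) := by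
        intro n; rw [hgsucc]; exact hfspec (g n) (hgS n)
      have hex : ∃ j, ∃ i, i < j ∧ g i = g j := by
        obtain ⟨i, j, hne, heq⟩ := Finite.exists_ne_map_eq_of_infinite g
        rcases hne.lt_or_gt with h | h
        · exact ⟨j, i, h, heq⟩
        · exact ⟨i, j, h, heq.symm⟩
      set j0 := Nat.find hex with hj0
      obtain ⟨i0, hij, heqg⟩ := Nat.find_spec hex
      have hinj : ∀ k l, k < j0 → l < j0 → g k = g l → k = l := by
        intro k l hk hl hgkl
        by_contra hkl
        rcases Nat.lt_or_ge k l with h | h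
        · exact absurd ⟨k, h, hgkl⟩ (Nat.find_min hex hl)
        · have h' : l < k := lt_of_le_of_ne h (fun he => hkl he.symm)
          exact absurd ⟨l, h', hgkl.symm⟩ (Nat.find_min hex hk)
      have hcase : j0 = i0 + 1 ∨ j0 = i0 + 2 ∨ i0 + 3 ≤ j0 := by omega
      rcases hcase with hc | hc | hc
      · have h1 := (harc i0).1
        rw [← hc, ← heqg] at h1
        exact hloop _ h1
      · have h1 := (harc i0).1
        have h2 := (harc (i0 + 1)).1
        have hgi2 : g (i0 + 2) = g i0 := by
          rw [show i0 + 2 = j0 from hc.symm]; exact heqg.symm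
        rw [hgi2] at h2
        exact hanti _ _ h2 h1
      · have hadj0 : (underlying A).Adj (g (i0 + 1)) (g i0) := adj_of_arc hT' (harc i0).1
        apply bridge19 hT' hadj0
        have hreach : ((underlying A).deleteEdges
            {s(g (i0 + 1), g i0)}).Reachable (g (i0 + 1)) (g j0) := by
          apply chain_reach19 g (i0 + 1) j0 (by omega)
          intro k hk hk'
          have hadjk : (underlying A).Adj (g k) (g (k + 1)) :=
            (adj_of_arc hT' (harc k).1).symm
          rw [SimpleGraph.deleteEdges_adj]
          refine ⟨hadjk, ?_⟩
          simp only [Set.mem_singleton_iff]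
          intro he
          rw [Sym2.eq_iff] at he
          rcases he with ⟨ha1, ha2⟩ | ⟨ha1, ha2⟩
          · have hk1 : k = i0 + 1 := hinj _ _ hk' (by omega) ha1
            have hk2 : k + 1 = i0 := hinj _ _ (by omega) (by omega) ha2
            omega
          · have hk1 : k = i0 := hinj _ _ hk' (by omega) ha1
            omega
        rw [← heqg] at hreach
        exact hreach
    obtain ⟨v, hsv, hnoin⟩ := hsrc
    have hout : ∃ u, A v u ∧ 0 < wArc A X Y v u := by
      by_cases hva : v = a
      · subst hva; exact ⟨b, hab, hpos⟩
      · obtain ⟨p⟩ := hsv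
        have hnbr : ∀ {y z : V}
            (_ : (SimpleGraph.fromRel fun u v => A u v ∧ 0 < wArc A X Y u v).Walk y z),
            z ≠ y →
            ∃ u, (SimpleGraph.fromRel fun u v => A u v ∧ 0 < wArc A X Y u v).Adj u z := by
          intro y z q
          induction q with
          | nil => intro h; exact absurd rfl h
          | @cons c d e hadj q' ih =>
            intro _
            by_cases hz : e = d
            · subst hz; exact ⟨c, hadj⟩
            · exact ih hz
        obtain ⟨u, hadj⟩ := hnbr p hva
        rw [SimpleGraph.fromRel_adj] at hadj
        rcases hadj.2 with h | h
        · exact absurd h (hnoin u)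
        · exact ⟨u, h⟩
    have hstar := star19 hT' X Y hcard v
    have hin0 : (∑ u ∈ Finset.univ.filter (fun u => A u v), wArc A X Y u v) = 0 := by
      apply Finset.sum_eq_zero
      intro u hu
      have hA := (Finset.mem_filter.mp hu).2
      have h1 := hw u v hA
      have h2 : ¬ 0 < wArc A X Y u v := fun hp' => hnoin u ⟨hA, hp'⟩
      omega
    have hout1 : 1 ≤ ∑ u ∈ Finset.univ.filter (fun u => A v u), wArc A X Y v u := by
      obtain ⟨u0, hu0, hp0⟩ := hout
      calc (1 : ℤ) ≤ wArc A X Y v u0 := hp0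
        _ ≤ _ := Finset.single_le_sum (f := fun u => wArc A X Y v u)
            (fun u hu => hw v u (Finset.mem_filter.mp hu).2)
            (Finset.mem_filter.mpr ⟨Finset.mem_univ _, hu0⟩)
    have hmu : 1 ≤ mu19 X Y v := by
      rw [hstar, hin0]; linarith
    have hvX : v ∈ X := by
      by_contra hvx
      have hle : mu19 X Y v ≤ 0 := by
        by_cases hvy : v ∈ Y <;> simp [mu19, hvx, hvy]
      linarith
    exact ⟨v, hsv, hvX, hnoin, hout⟩
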